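/- Let ℒ be a set of s nonnegative integers and K = {k_1,...,k_r} a set of integers with k_i > s - r for each i. If 𝒜 is an ℒ-intersecting family of subsets of {1,...,n} with |A| ∈ K for every A ∈ 𝒜, then |𝒜| ≤ C(n,s) + C(n,s-1) + ... + C(n,s-r+1). -/

import Mathlib

open Finset Submodule

namespace ABSaux

variable {n : ℕ}

/-- Indicator "monomial" function of a subset. -/
def mono (I : Finset (Fin n)) : Finset (Fin n) → ℚ :=
  fun B => if I ⊆ B then 1 else 0

/-- Span of monomials of degree at most `d`. -/
def Sp (n d : ℕ) : Submodule ℚ (Finset (Fin n) → ℚ) :=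
  span ℚ (mono '' {I : Finset (Fin n) | I.card ≤ d})

lemma mono_mem {I : Finset (Fin n)} {d : ℕ} (h : I.card ≤ d) : mono I ∈ Sp n d :=
  subset_span ⟨I, h, rfl⟩

lemma Sp_le {d e : ℕ} (h : d ≤ e) : Sp n d ≤ Sp n e :=
  span_mono (Set.image_mono (f := mono) fun _ hI => le_trans hI h)

lemma mul_linear_mem {d : ℕ} {f : Finset (Fin n) → ℚ} (hf : f ∈ Sp n d)
    (A : Finset (Fin n)) (c : ℚ) :
    (fun B => (((A ∩ B).card : ℚ) - c) * f B) ∈ Sp n (d + 1) := by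
  induction hf using Submodule.span_induction with
  | mem x hx =>
      obtain ⟨I, hI, rfl⟩ := hx
      have hfun : (fun B => (((A ∩ B).card : ℚ) - c) * mono I B)
          = (∑ a ∈ A, mono (insert a I)) - c • mono I := by
        funext B
        simp only [Finset.sum_apply, Pi.sub_apply, Pi.smul_apply, smul_eq_mul, mono]
        by_cases hIB : I ⊆ B
        · have : ∀ a ∈ A, (if insert a I ⊆ B then (1:ℚ) else 0)
              = if a ∈ B then 1 else 0 := by
            intro a _
            by_cases hab : a ∈ B
            · simp [hab, Finset.insert_subset_iff, hIB]
            · simp [hab, Finset.insert_subset_iff]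
          rw [Finset.sum_congr rfl this]
          have hcard : ((A ∩ B).card : ℚ) = ∑ a ∈ A, if a ∈ B then (1:ℚ) else 0 := by
            rw [Finset.sum_ite_mem, Finset.sum_const, nsmul_eq_mul, mul_one]
          rw [if_pos hIB, mul_one, mul_one, ← hcard]
        · have : ∀ a ∈ A, (if insert a I ⊆ B then (1:ℚ) else 0) = 0 := by
            intro a _
            have : ¬ insert a I ⊆ B := fun h => hIB (by
              intro x hx; exact h (Finset.mem_insert_of_mem hx))
            simp [this]
          rw [Finset.sum_congr rfl this]
          simp [hIB]
      rw [hfun]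
      refine sub_mem (Submodule.sum_mem _ fun a _ => ?_) (Submodule.smul_mem _ _ ?_)
      · exact mono_mem (le_trans (Finset.card_insert_le _ _) (Nat.succ_le_succ hI))
      · exact mono_mem (hI.trans (Nat.le_succ d))
  | zero =>
      have : (fun B : Finset (Fin n) => (((A ∩ B).card : ℚ) - c) * (0 : Finset (Fin n) → ℚ) B)
          = 0 := by funext B; simp
      rw [this]; exact (Sp n (d+1)).zero_mem
  | add x y _ _ hx hy =>
      have : (fun B => (((A ∩ B).card : ℚ) - c) * (x + y) B)
          = (fun B => (((A ∩ B).card : ℚ) - c) * x B)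
            + (fun B => (((A ∩ B).card : ℚ) - c) * y B) := by
        funext B; simp [mul_add]
      rw [this]; exact add_mem hx hy
  | smul t x _ hx =>
      have : (fun B => (((A ∩ B).card : ℚ) - c) * (t • x) B)
          = t • (fun B => (((A ∩ B).card : ℚ) - c) * x B) := by
        funext B; simp [smul_eq_mul]; ring
      rw [this]; exact Submodule.smul_mem _ _ hx

lemma mul_prod_mem {d : ℕ} {f : Finset (Fin n) → ℚ} (hf : f ∈ Sp n d)
    (A : Finset (Fin n)) (T : Finset ℕ) (c : ℕ → ℚ) :
    (fun B => f B * ∏ k ∈ T, (((A ∩ B).card : ℚ) - c k)) ∈ Sp n (d + T.card) := by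
  classical
  induction T using Finset.induction with
  | empty => simpa using hf
  | @insert a T ha ih =>
      have heq : (fun B => f B * ∏ k ∈ insert a T, (((A ∩ B).card : ℚ) - c k))
          = fun B => (((A ∩ B).card : ℚ) - c a)
              * (f B * ∏ k ∈ T, (((A ∩ B).card : ℚ) - c k)) := by
        funext B; rw [Finset.prod_insert ha]; ring
      rw [heq]
      have := mul_linear_mem ih A (c a)
      have hc : d + T.card + 1 = d + (insert a T).card := by
        rw [Finset.card_insert_of_notMem ha]; omega
      rwa [hc] at this

/-- The function attached to a member of the family. -/
def ffun (L : Finset ℕ) (A : Finset (Fin n)) : Finset (Fin n) → ℚ :=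
  fun B => ∏ l ∈ L.filter (· < A.card), (((A ∩ B).card : ℚ) - l)

/-- The auxiliary functions. -/
def gfun (K : Finset ℕ) (J : Finset (Fin n)) : Finset (Fin n) → ℚ :=
  fun B => mono J B * ∏ k ∈ K, ((B.card : ℚ) - k)

lemma ffun_mem (L : Finset ℕ) (A : Finset (Fin n)) :
    ffun L A ∈ Sp n (L.filter (· < A.card)).card := by
  have h := mul_prod_mem (mono_mem (I := (∅ : Finset (Fin n))) (d := 0) (by simp)) A
    (L.filter (· < A.card)) (fun k => (k : ℚ))
  have : (fun B => mono (∅ : Finset (Fin n)) B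
      * ∏ l ∈ L.filter (· < A.card), (((A ∩ B).card : ℚ) - l)) = ffun L A := by
    funext B; simp [mono, ffun]
  rwa [this, zero_add] at h

lemma gfun_mem (K : Finset ℕ) (J : Finset (Fin n)) :
    gfun K J ∈ Sp n (J.card + K.card) := by
  have h := mul_prod_mem (mono_mem (le_refl J.card)) Finset.univ K (fun k => (k : ℚ))
  have : (fun B => mono J B * ∏ k ∈ K, (((Finset.univ ∩ B).card : ℚ) - k)) = gfun K J := by
    funext B; simp [gfun, Finset.univ_inter]
  rwa [this] at h

lemma span_image_finrank (T : Finset (Finset (Fin n))) :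
    Module.finrank ℚ (span ℚ ((T.image mono : Finset (Finset (Fin n) → ℚ)) :
      Set (Finset (Fin n) → ℚ))) ≤ T.card := by
  classical
  refine le_trans ?_ (Finset.card_image_le (f := mono))
  exact finrank_span_finset_le_card _

lemma Sp_eq (n d : ℕ) : Sp n d = span ℚ
    ((((univ.filter (fun I : Finset (Fin n) => I.card ≤ d)).image mono :
      Finset (Finset (Fin n) → ℚ)) : Set _)) := by
  classical
  rw [Sp]
  congr 1
  ext f
  simp [Set.mem_image]

instance (n d : ℕ) : FiniteDimensional ℚ (Sp n d) := by
  classical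
  rw [Sp_eq]
  exact FiniteDimensional.span_finset ℚ _

lemma Sp_finrank (n d : ℕ) :
    Module.finrank ℚ (Sp n d) ≤ (univ.filter (fun I : Finset (Fin n) => I.card ≤ d)).card := by
  classical
  set T := univ.filter (fun I : Finset (Fin n) => I.card ≤ d) with hT
  clear_value T
  rw [Sp_eq, ← hT]
  exact span_image_finrank T

end ABSaux

open ABSaux Finset Submodule

set_option maxHeartbeats 1000000 in
theorem alon_babai_suzuki (n s r : ℕ) (L K : Finset ℕ)
    (hL : L.card = s) (hK : K.card = r)
    (hKbig : ∀ k ∈ K, (s : ℤ) - r < (k : ℤ))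
    (𝒜 : Finset (Finset (Fin n)))
    (hsizes : ∀ A ∈ 𝒜, A.card ∈ K)
    (hintersecting : ∀ A ∈ 𝒜, ∀ B ∈ 𝒜, A ≠ B → (A ∩ B).card ∈ L) :
    𝒜.card ≤ ∑ i ∈ Finset.range r, if i ≤ s then n.choose (s - i) else 0 := by
  classical
  -- index sets
  set 𝒥 : Finset (Finset (Fin n)) := univ.filter (fun J => J.card + r ≤ s) with h𝒥
  set 𝒮 : Finset (Finset (Fin n)) := univ.filter (fun I => I.card ≤ s) with h𝒮
  -- the family of vectors
  set v : ({A // A ∈ 𝒜} ⊕ {J // J ∈ 𝒥}) → (Finset (Fin n) → ℚ) :=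
    Sum.elim (fun a => ffun L a.1) (fun j => gfun K j.1) with hv
  have hvmem : ∀ i, v i ∈ Sp n s := by
    rintro (a | j)
    · exact Sp_le (le_trans (Finset.card_filter_le _ _) (le_of_eq hL)) (ffun_mem L a.1)
    · have hj : j.1.card + r ≤ s := (Finset.mem_filter.mp j.2).2
      have := gfun_mem K j.1
      rw [hK] at this
      exact Sp_le hj this
  -- linear independence
  have hli : LinearIndependent ℚ v := by
    rw [Fintype.linearIndependent_iff]
    intro g hg
    have hB : ∀ B : Finset (Fin n),
        (∑ a : {A // A ∈ 𝒜}, g (Sum.inl a) * ffun L a.1 B)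
        + (∑ j : {J // J ∈ 𝒥}, g (Sum.inr j) * gfun K j.1 B) = 0 := by
      intro B
      have h2 : (∑ i : ({A // A ∈ 𝒜} ⊕ {J // J ∈ 𝒥}), g i • v i) B = 0 := by
        rw [hg]; rfl
      rw [Fintype.sum_sum_type] at h2
      simp only [Finset.sum_apply, Pi.add_apply, Pi.smul_apply, smul_eq_mul, hv,
        Sum.elim_inl, Sum.elim_inr] at h2
      exact h2
    -- Step 1 : coefficients on 𝒜 vanish
    have hA0 : ∀ a : {A // A ∈ 𝒜}, g (Sum.inl a) = 0 := by
      by_contra hcon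
      push_neg at hcon
      obtain ⟨a₀, ha₀⟩ := hcon
      have hne : (𝒜.attach.filter (fun a => g (Sum.inl a) ≠ 0)).Nonempty :=
        ⟨a₀, Finset.mem_filter.mpr ⟨Finset.mem_attach _ _, ha₀⟩⟩
      obtain ⟨b, hb, hbmin⟩ := Finset.exists_min_image _ (fun a => a.1.card) hne
      have hbne : g (Sum.inl b) ≠ 0 := (Finset.mem_filter.mp hb).2
      have key := hB b.1
      -- the g-part vanishes since |b| ∈ K
      have hg0 : ∀ j : {J // J ∈ 𝒥}, g (Sum.inr j) * gfun K j.1 b.1 = 0 := by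
        intro j
        have : (∏ k ∈ K, ((b.1.card : ℚ) - k)) = 0 :=
          Finset.prod_eq_zero (hsizes b.1 b.2) (by simp)
        simp [gfun, this]
      rw [Finset.sum_congr rfl (fun j _ => hg0 j), Finset.sum_const_zero, add_zero] at key
      -- the f-part is triangular
      have hsingle : ∑ a : {A // A ∈ 𝒜}, g (Sum.inl a) * ffun L a.1 b.1
          = g (Sum.inl b) * ffun L b.1 b.1 := by
        refine Finset.sum_eq_single_of_mem b (Finset.mem_univ _) ?_
        intro a _ hab
        by_cases hga : g (Sum.inl a) = 0
        · simp [hga]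
        · have haf : a ∈ (univ : Finset {A // A ∈ 𝒜}).filter (fun a => g (Sum.inl a) ≠ 0) :=
            Finset.mem_filter.mpr ⟨Finset.mem_univ _, hga⟩
          have hcardle : b.1.card ≤ a.1.card := hbmin a haf
          have hne1 : a.1 ≠ b.1 := fun h => hab (Subtype.ext h)
          have hssub : a.1 ∩ b.1 ⊂ a.1 := by
            refine Finset.ssubset_iff_subset_ne.mpr ⟨Finset.inter_subset_left, ?_⟩
            intro h
            have hsub : a.1 ⊆ b.1 := by
              rw [← h]; exact Finset.inter_subset_right
            have : a.1.card < b.1.card :=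
              Finset.card_lt_card (Finset.ssubset_iff_subset_ne.mpr ⟨hsub, hne1⟩)
            omega
          have hmemL : (a.1 ∩ b.1).card ∈ L := hintersecting a.1 a.2 b.1 b.2 hne1
          have : ffun L a.1 b.1 = 0 := by
            refine Finset.prod_eq_zero (i := (a.1 ∩ b.1).card) ?_ (by simp)
            exact Finset.mem_filter.mpr ⟨hmemL, Finset.card_lt_card hssub⟩
          simp [this]
      rw [hsingle] at key
      have hffne : ffun L b.1 b.1 ≠ 0 := by
        rw [ffun]
        refine Finset.prod_ne_zero_iff.mpr ?_
        intro l hl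
        have hlt : l < b.1.card := (Finset.mem_filter.mp hl).2
        rw [Finset.inter_self]
        have : (l : ℚ) < (b.1.card : ℚ) := by exact_mod_cast hlt
        linarith
      exact hbne (by
        rcases mul_eq_zero.mp key with h | h
        · exact h
        · exact absurd h hffne)
    -- Step 2 : coefficients on 𝒥 vanish
    have hJ0 : ∀ j : {J // J ∈ 𝒥}, g (Sum.inr j) = 0 := by
      by_contra hcon
      push_neg at hcon
      obtain ⟨j₀, hj₀⟩ := hcon
      have hne : ((univ : Finset {J // J ∈ 𝒥}).filter (fun j => g (Sum.inr j) ≠ 0)).Nonempty :=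
        ⟨j₀, Finset.mem_filter.mpr ⟨Finset.mem_univ _, hj₀⟩⟩
      obtain ⟨b, hb, hbmin⟩ := Finset.exists_min_image _ (fun j => j.1.card) hne
      have hbne : g (Sum.inr b) ≠ 0 := (Finset.mem_filter.mp hb).2
      have key := hB b.1
      rw [Finset.sum_congr rfl (fun a _ => by rw [hA0 a, zero_mul]),
        Finset.sum_const_zero, zero_add] at key
      have hsingle : ∑ j : {J // J ∈ 𝒥}, g (Sum.inr j) * gfun K j.1 b.1
          = g (Sum.inr b) * gfun K b.1 b.1 := by
        refine Finset.sum_eq_single_of_mem b (Finset.mem_univ _) ?_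
        intro j _ hjb
        by_cases hgj : g (Sum.inr j) = 0
        · simp [hgj]
        · have hjf : j ∈ (univ : Finset {J // J ∈ 𝒥}).filter (fun j => g (Sum.inr j) ≠ 0) :=
            Finset.mem_filter.mpr ⟨Finset.mem_univ _, hgj⟩
          have hcardle : b.1.card ≤ j.1.card := hbmin j hjf
          have hne1 : j.1 ≠ b.1 := fun h => hjb (Subtype.ext h)
          have hnsub : ¬ j.1 ⊆ b.1 := by
            intro h
            have : j.1.card < b.1.card :=
              Finset.card_lt_card (Finset.ssubset_iff_subset_ne.mpr ⟨h, hne1⟩)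
            omega
          simp [gfun, mono, hnsub]
      rw [hsingle] at key
      have hgne : gfun K b.1 b.1 ≠ 0 := by
        have hbcard : b.1.card + r ≤ s := (Finset.mem_filter.mp b.2).2
        rw [gfun, mono]
        simp only [Finset.Subset.refl, if_pos, one_mul]
        refine Finset.prod_ne_zero_iff.mpr ?_
        intro k hk
        have h1 : (s : ℤ) - r < (k : ℤ) := hKbig k hk
        have h2 : (b.1.card : ℤ) ≤ (s : ℤ) - r := by
          omega
        have : b.1.card ≠ k := by
          intro h; rw [h] at h2; omega
        intro hzero
        apply this
        have : (b.1.card : ℚ) = (k : ℚ) := by linarith [sub_eq_zero.mp hzero]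
        exact_mod_cast this
      exact hbne (by
        rcases mul_eq_zero.mp key with h | h
        · exact h
        · exact absurd h hgne)
    rintro (a | j)
    · exact hA0 a
    · exact hJ0 j
  -- transfer to the subspace and count dimensions
  set W := Sp n s with hW
  have hliW : LinearIndependent ℚ (fun i => (⟨v i, hvmem i⟩ : W)) := by
    apply LinearIndependent.of_comp W.subtype
    exact hli
  haveI : FiniteDimensional ℚ W := by rw [hW]; infer_instance
  have hcard1 : Fintype.card ({A // A ∈ 𝒜} ⊕ {J // J ∈ 𝒥}) ≤ Module.finrank ℚ W :=
    hliW.fintype_card_le_finrank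
  have hdim : Module.finrank ℚ W ≤ 𝒮.card := by
    rw [hW, h𝒮]
    exact Sp_finrank n s
  have hcards : 𝒜.card + 𝒥.card ≤ 𝒮.card := by
    have h3 := le_trans hcard1 hdim
    rw [Fintype.card_sum] at h3
    have e1 : Fintype.card {A // A ∈ 𝒜} = 𝒜.card :=
      (Fintype.card_congr (Equiv.refl _)).trans (Fintype.card_coe 𝒜)
    have e2 : Fintype.card {J // J ∈ 𝒥} = 𝒥.card :=
      (Fintype.card_congr (Equiv.refl _)).trans (Fintype.card_coe 𝒥)
    rw [e1, e2] at h3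
    exact h3
  -- counting
  have hsub : 𝒥 ⊆ 𝒮 := by
    intro J hJ
    simp only [h𝒥, h𝒮, Finset.mem_filter, Finset.mem_univ, true_and] at hJ ⊢
    omega
  have hbound : 𝒜.card ≤ (𝒮 \ 𝒥).card := by
    rw [Finset.card_sdiff_of_subset hsub]
    omega
  refine le_trans hbound (le_of_eq ?_)
  have hD : 𝒮 \ 𝒥 = ((Finset.range r).filter (· ≤ s)).biUnion
      (fun i => Finset.powersetCard (s - i) univ) := by
    ext I
    simp only [Finset.mem_sdiff, h𝒮, h𝒥, Finset.mem_filter, Finset.mem_univ, true_and,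
      Finset.mem_biUnion, Finset.mem_range, Finset.mem_powersetCard]
    constructor
    · rintro ⟨h1, h2⟩
      exact ⟨s - I.card, ⟨by omega, by omega⟩, Finset.subset_univ _, by omega⟩
    · rintro ⟨i, ⟨hir, his⟩, _, hcard⟩
      omega
  rw [hD, Finset.card_biUnion, Finset.sum_filter]
  · refine Finset.sum_congr rfl ?_
    intro i _
    by_cases his : i ≤ s
    · simp [his, Finset.card_powersetCard]
    · simp [his]
  · intro i hi j hj hij
    rw [Finset.mem_coe, Finset.mem_filter, Finset.mem_range] at hi hj
    refine Finset.disjoint_left.mpr ?_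
    intro I hI hI'
    rw [Finset.mem_powersetCard] at hI hI'
    obtain ⟨-, h1⟩ := hI
    obtain ⟨-, h2⟩ := hI'
    omega
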